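/- Let X be a Banach space admitting an equivalent locally uniformly rotund norm and having Lindenstrauss property A. Then the set SE(X) of strongly exposing functionals on B_X is dense in X*. -/

import Mathlib

open Filter Topology RCLike Bornology

/-- `f` strongly exposes the bounded set `C` at `x₀`. -/
def StronglyExposes {𝕜 X : Type} [RCLike 𝕜] [NormedAddCommGroup X] [NormedSpace 𝕜 X]
    (f : X →L[𝕜] 𝕜) (C : Set X) (x₀ : X) : Prop :=
  x₀ ∈ C ∧ (∀ x ∈ C, re (f x) ≤ re (f x₀)) ∧
    ∀ u : ℕ → X, (∀ n, u n ∈ C) →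
      Tendsto (fun n => re (f (u n))) atTop (𝓝 (re (f x₀))) →
      Tendsto u atTop (𝓝 x₀)

/-- `f` strongly exposes the closed unit ball at `x₀`. -/
def StronglyExposesBall {𝕜 X : Type} [RCLike 𝕜] [NormedAddCommGroup X] [NormedSpace 𝕜 X]
    (f : X →L[𝕜] 𝕜) (x₀ : X) : Prop :=
  ‖x₀‖ ≤ 1 ∧ re (f x₀) = ‖f‖ ∧
    ∀ u : ℕ → X, (∀ n, ‖u n‖ ≤ 1) →
      Tendsto (fun n => re (f (u n))) atTop (𝓝 ‖f‖) →
      Tendsto u atTop (𝓝 x₀)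

/-- `T` absolutely strongly exposes the closed unit ball at `x₀`. -/
def AbsStronglyExposes {𝕜 X Y : Type} [RCLike 𝕜] [NormedAddCommGroup X] [NormedSpace 𝕜 X]
    [NormedAddCommGroup Y] [NormedSpace 𝕜 Y] (T : X →L[𝕜] Y) (x₀ : X) : Prop :=
  ‖x₀‖ ≤ 1 ∧
    ∀ u : ℕ → X, (∀ n, ‖u n‖ ≤ 1) →
      Tendsto (fun n => ‖T (u n)‖) atTop (𝓝 ‖T‖) →
      ∃ θ : ℕ → 𝕜, (∀ n, ‖θ n‖ = 1) ∧ Tendsto (fun n => θ n • u n) atTop (𝓝 x₀)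

/-- `X` admits an equivalent locally uniformly rotund norm: a norm `N`, equivalent to the
given one, such that every point is an LUR point of `N`. -/
def HasEquivLURNorm (𝕜 X : Type) [RCLike 𝕜] [NormedAddCommGroup X] [NormedSpace 𝕜 X] : Prop :=
  ∃ (N : X → ℝ) (c C : ℝ), 0 < c ∧ 0 < C ∧
    (∀ x, c * ‖x‖ ≤ N x ∧ N x ≤ C * ‖x‖) ∧
    (∀ x y : X, N (x + y) ≤ N x + N y) ∧
    (∀ (a : 𝕜) (x : X), N (a • x) = ‖a‖ * N x) ∧
    (∀ (x₀ : X) (u : ℕ → X), (∀ n, N (u n) ≤ N x₀) →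
      Tendsto (fun n => N (u n + x₀)) atTop (𝓝 (2 * N x₀)) →
      Tendsto (fun n => N (u n - x₀)) atTop (𝓝 0))


namespace SE14

variable {𝕜 X : Type} [RCLike 𝕜] [NormedAddCommGroup X] [NormedSpace 𝕜 X]

structure LURData (𝕜 X : Type) [RCLike 𝕜] [NormedAddCommGroup X] [NormedSpace 𝕜 X] where
  N : X → ℝ
  c : ℝ
  C : ℝ
  hc : 0 < c
  hC : 0 < C
  lb : ∀ x, c * ‖x‖ ≤ N x
  ub : ∀ x, N x ≤ C * ‖x‖
  tri : ∀ x y, N (x + y) ≤ N x + N y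
  nsmul : ∀ (a : 𝕜) (x : X), N (a • x) = ‖a‖ * N x
  lur : ∀ (x₀ : X) (u : ℕ → X), (∀ n, N (u n) ≤ N x₀) →
    Tendsto (fun n => N (u n + x₀)) atTop (𝓝 (2 * N x₀)) →
    Tendsto (fun n => N (u n - x₀)) atTop (𝓝 0)

namespace LURData

variable (d : LURData 𝕜 X)

lemma nonneg (x : X) : 0 ≤ d.N x :=
  le_trans (mul_nonneg d.hc.le (norm_nonneg x)) (d.lb x)

lemma N_zero : d.N 0 = 0 := by simpa using d.nsmul 0 0

lemma N_neg (x : X) : d.N (-x) = d.N x := by simpa using d.nsmul (-1 : 𝕜) x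

lemma eq_zero_of_N {x : X} (h : d.N x = 0) : x = 0 := by
  have := d.lb x
  rw [h] at this
  have hx : ‖x‖ ≤ 0 := by nlinarith [d.hc, norm_nonneg x]
  simpa using le_antisymm hx (norm_nonneg x)

end LURData

/-- An elementary ℓ₂-triangle inequality in the plane. -/
lemma l2_tri {x y x' y' : ℝ} (hx : 0 ≤ x) (hy : 0 ≤ y) (hx' : 0 ≤ x') (hy' : 0 ≤ y') :
    Real.sqrt ((x + x') ^ 2 + (y + y') ^ 2) ≤
      Real.sqrt (x ^ 2 + y ^ 2) + Real.sqrt (x' ^ 2 + y' ^ 2) := by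
  set s := Real.sqrt (x ^ 2 + y ^ 2) with hs
  set s' := Real.sqrt (x' ^ 2 + y' ^ 2) with hs'
  have hsn : 0 ≤ s := Real.sqrt_nonneg _
  have hsn' : 0 ≤ s' := Real.sqrt_nonneg _
  have hs2 : s ^ 2 = x ^ 2 + y ^ 2 := Real.sq_sqrt (by positivity)
  have hs2' : s' ^ 2 = x' ^ 2 + y' ^ 2 := Real.sq_sqrt (by positivity)
  have cross : x * x' + y * y' ≤ s * s' := by
    nlinarith [sq_nonneg (x * y' - y * x'), sq_nonneg (s * s' - (x * x' + y * y')),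
      mul_nonneg hsn hsn', mul_nonneg (mul_nonneg hx hx') (mul_nonneg hy hy'),
      mul_nonneg hx hx', mul_nonneg hy hy']
  have key : (x + x') ^ 2 + (y + y') ^ 2 ≤ (s + s') ^ 2 := by nlinarith
  calc Real.sqrt ((x + x') ^ 2 + (y + y') ^ 2) ≤ Real.sqrt ((s + s') ^ 2) :=
        Real.sqrt_le_sqrt key
    _ = s + s' := Real.sqrt_sq (by positivity)

/-- The space `𝕜 ⊕₂ (X, N)`. -/
def LW (d : LURData 𝕜 X) : Type := 𝕜 × X

variable {d : LURData 𝕜 X}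

instance : AddCommGroup (LW d) := inferInstanceAs (AddCommGroup (𝕜 × X))
instance : Module 𝕜 (LW d) := inferInstanceAs (Module 𝕜 (𝕜 × X))

def w1 (d : LURData 𝕜 X) : LW d → 𝕜 := Prod.fst
def w2 (d : LURData 𝕜 X) : LW d → X := Prod.snd
def mkW (d : LURData 𝕜 X) (a : 𝕜) (x : X) : LW d := (a, x)

@[simp] lemma w1_mkW (a : 𝕜) (x : X) : w1 d (mkW d a x) = a := rfl
@[simp] lemma w2_mkW (a : 𝕜) (x : X) : w2 d (mkW d a x) = x := rfl
@[simp] lemma w1_add (u v : LW d) : w1 d (u + v) = w1 d u + w1 d v := rfl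
@[simp] lemma w2_add (u v : LW d) : w2 d (u + v) = w2 d u + w2 d v := rfl
@[simp] lemma w1_sub (u v : LW d) : w1 d (u - v) = w1 d u - w1 d v := rfl
@[simp] lemma w2_sub (u v : LW d) : w2 d (u - v) = w2 d u - w2 d v := rfl
@[simp] lemma w1_smul (a : 𝕜) (u : LW d) : w1 d (a • u) = a * w1 d u := rfl
@[simp] lemma w2_smul (a : 𝕜) (u : LW d) : w2 d (a • u) = a • w2 d u := rfl
@[simp] lemma w1_neg (u : LW d) : w1 d (-u) = -(w1 d u) := rfl
@[simp] lemma w2_neg (u : LW d) : w2 d (-u) = -(w2 d u) := rfl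
@[simp] lemma w1_zero : w1 d 0 = 0 := rfl
@[simp] lemma w2_zero : w2 d 0 = 0 := rfl

lemma mkW_eta (u : LW d) : mkW d (w1 d u) (w2 d u) = u := rfl

lemma mkW_add (a b : 𝕜) (x y : X) : mkW d a x + mkW d b y = mkW d (a + b) (x + y) := rfl

lemma mkW_smul (r a : 𝕜) (x : X) : r • mkW d a x = mkW d (r * a) (r • x) := rfl

noncomputable instance : NormedAddCommGroup (LW d) :=
  AddGroupNorm.toNormedAddCommGroup
  { toFun := fun w => Real.sqrt (‖w1 d w‖ ^ 2 + d.N (w2 d w) ^ 2)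
    map_zero' := by simp [d.N_zero]
    add_le' := fun u v => by
      have h1 : ‖w1 d (u + v)‖ ≤ ‖w1 d u‖ + ‖w1 d v‖ := by
        rw [w1_add]; exact norm_add_le _ _
      have h2 : d.N (w2 d (u + v)) ≤ d.N (w2 d u) + d.N (w2 d v) := by
        rw [w2_add]; exact d.tri _ _
      calc Real.sqrt (‖w1 d (u + v)‖ ^ 2 + d.N (w2 d (u + v)) ^ 2)
          ≤ Real.sqrt ((‖w1 d u‖ + ‖w1 d v‖) ^ 2 + (d.N (w2 d u) + d.N (w2 d v)) ^ 2) := by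
            apply Real.sqrt_le_sqrt
            have := d.nonneg (w2 d (u + v))
            have hn1 : (0:ℝ) ≤ ‖w1 d u‖ + ‖w1 d v‖ := by positivity
            have hn2 : (0:ℝ) ≤ d.N (w2 d u) + d.N (w2 d v) := by
              have := d.nonneg (w2 d u); have := d.nonneg (w2 d v); linarith
            have := d.nonneg (w2 d (u + v))
            gcongr
        _ ≤ _ := l2_tri (norm_nonneg _) (d.nonneg _) (norm_nonneg _) (d.nonneg _)
    neg' := fun u => by simp only [w1_neg, w2_neg, norm_neg, d.N_neg]
    eq_zero_of_map_eq_zero' := fun u hu => by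
      have hsum : ‖w1 d u‖ ^ 2 + d.N (w2 d u) ^ 2 = 0 := by
        have h0 : (0:ℝ) ≤ ‖w1 d u‖ ^ 2 + d.N (w2 d u) ^ 2 := by positivity
        exact (Real.sqrt_eq_zero h0).1 hu
      have h1 : ‖w1 d u‖ = 0 := by nlinarith [sq_nonneg (d.N (w2 d u)), sq_nonneg ‖w1 d u‖, norm_nonneg (w1 d u)]
      have h2 : d.N (w2 d u) = 0 := by nlinarith [sq_nonneg ‖w1 d u‖, d.nonneg (w2 d u)]
      have e1 : w1 d u = 0 := norm_eq_zero.1 h1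
      have e2 : w2 d u = 0 := d.eq_zero_of_N h2
      rw [← mkW_eta u, e1, e2]; rfl }

lemma norm_LW (u : LW d) : ‖u‖ = Real.sqrt (‖w1 d u‖ ^ 2 + d.N (w2 d u) ^ 2) := rfl

lemma norm_LW_sq (u : LW d) : ‖u‖ ^ 2 = ‖w1 d u‖ ^ 2 + d.N (w2 d u) ^ 2 := by
  rw [norm_LW]; exact Real.sq_sqrt (by positivity)

noncomputable instance : NormedSpace 𝕜 (LW d) where
  norm_smul_le a u := by
    apply le_of_eq
    rw [norm_LW, norm_LW, w1_smul, w2_smul, norm_mul, d.nsmul, mul_pow, mul_pow, ← mul_add,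
      Real.sqrt_mul (by positivity), Real.sqrt_sq (norm_nonneg a)]

lemma norm_w1_le (u : LW d) : ‖w1 d u‖ ≤ ‖u‖ := by
  rw [norm_LW]
  calc ‖w1 d u‖ = Real.sqrt (‖w1 d u‖ ^ 2) := (Real.sqrt_sq (norm_nonneg _)).symm
    _ ≤ _ := Real.sqrt_le_sqrt (by nlinarith [sq_nonneg (d.N (w2 d u))])

lemma N_w2_le (u : LW d) : d.N (w2 d u) ≤ ‖u‖ := by
  rw [norm_LW]
  calc d.N (w2 d u) = Real.sqrt (d.N (w2 d u) ^ 2) := (Real.sqrt_sq (d.nonneg _)).symm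
    _ ≤ _ := Real.sqrt_le_sqrt (by nlinarith [sq_nonneg ‖w1 d u‖])

lemma norm_w2_le (u : LW d) : ‖w2 d u‖ ≤ d.c⁻¹ * ‖u‖ := by
  have h := (d.lb (w2 d u)).trans (N_w2_le u)
  rw [inv_mul_eq_div, le_div_iff₀ d.hc]
  linarith

lemma norm_LW_le (u : LW d) : ‖u‖ ≤ (1 + d.C) * max ‖w1 d u‖ ‖w2 d u‖ := by
  have h2 : d.N (w2 d u) ≤ d.C * ‖w2 d u‖ := d.ub _
  have key : ‖u‖ ≤ ‖w1 d u‖ + d.N (w2 d u) := by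
    rw [norm_LW]
    have := l2_tri (x := ‖w1 d u‖) (y := 0) (x' := 0) (y' := d.N (w2 d u))
      (norm_nonneg _) le_rfl le_rfl (d.nonneg _)
    simpa [Real.sqrt_sq, norm_nonneg, d.nonneg, Real.sqrt_sq (norm_nonneg (w1 d u)),
      Real.sqrt_sq (d.nonneg (w2 d u))] using this
  have h3 : ‖w1 d u‖ ≤ max ‖w1 d u‖ ‖w2 d u‖ := le_max_left _ _
  have h4 : ‖w2 d u‖ ≤ max ‖w1 d u‖ ‖w2 d u‖ := le_max_right _ _
  have h5 : (0:ℝ) ≤ max ‖w1 d u‖ ‖w2 d u‖ := le_trans (norm_nonneg _) h3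
  nlinarith [d.hC]

def toProd (d : LURData 𝕜 X) : LW d → 𝕜 × X := fun w => w
def ofProd (d : LURData 𝕜 X) : 𝕜 × X → LW d := fun w => w

lemma norm_toProd (u : LW d) : ‖toProd d u‖ ≤ max 1 d.c⁻¹ * ‖u‖ := by
  have h : ‖toProd d u‖ = max ‖w1 d u‖ ‖w2 d u‖ := rfl
  rw [h]
  have h0 : (0:ℝ) ≤ ‖u‖ := norm_nonneg _
  apply max_le
  · calc ‖w1 d u‖ ≤ ‖u‖ := norm_w1_le u
      _ = 1 * ‖u‖ := (one_mul _).symm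
      _ ≤ max 1 d.c⁻¹ * ‖u‖ := by gcongr; exact le_max_left _ _
  · calc ‖w2 d u‖ ≤ d.c⁻¹ * ‖u‖ := norm_w2_le u
      _ ≤ max 1 d.c⁻¹ * ‖u‖ := by gcongr; exact le_max_right _ _

lemma norm_ofProd (w : 𝕜 × X) : ‖ofProd d w‖ ≤ (1 + d.C) * ‖w‖ := by
  have h := norm_LW_le (ofProd d w)
  have h1 : max ‖w1 d (ofProd d w)‖ ‖w2 d (ofProd d w)‖ = ‖w‖ := (Prod.norm_def w).symm
  rwa [h1] at h

noncomputable def uLW (d : LURData 𝕜 X) : LW d ≃ᵤ (𝕜 × X) where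
  toFun := toProd d
  invFun := ofProd d
  left_inv := fun _ => rfl
  right_inv := fun _ => rfl
  uniformContinuous_toFun := by
    apply LipschitzWith.uniformContinuous
      (K := ⟨max 1 d.c⁻¹, le_max_of_le_left zero_le_one⟩)
    apply LipschitzWith.of_dist_le_mul
    intro x y
    rw [dist_eq_norm, dist_eq_norm]
    exact norm_toProd (x - y)
  uniformContinuous_invFun := by
    apply LipschitzWith.uniformContinuous
      (K := ⟨1 + d.C, by have := d.hC; positivity⟩)
    apply LipschitzWith.of_dist_le_mul
    intro x y
    rw [dist_eq_norm, dist_eq_norm]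
    exact norm_ofProd (x - y)

noncomputable instance [CompleteSpace X] : CompleteSpace (LW d) :=
  (uLW d).completeSpace_iff.mpr inferInstance

/-- Squeeze for a sum of two sequences. -/
lemma tendsto_pair {A B A' B' : ℕ → ℝ} {a b : ℝ} (hA : ∀ n, A n ≤ A' n) (hB : ∀ n, B n ≤ B' n)
    (hAB : Tendsto (fun n => A n + B n) atTop (𝓝 (a + b)))
    (hA' : Tendsto A' atTop (𝓝 a)) (hB' : Tendsto B' atTop (𝓝 b)) :
    Tendsto A atTop (𝓝 a) ∧ Tendsto B atTop (𝓝 b) := by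
  constructor
  · apply tendsto_of_tendsto_of_tendsto_of_le_of_le
      (g := fun n => A n + B n - B' n) (h := A')
    · simpa using hAB.sub hB'
    · exact hA'
    · intro n; have := hB n; simp only; linarith
    · exact hA
  · apply tendsto_of_tendsto_of_tendsto_of_le_of_le
      (g := fun n => A n + B n - A' n) (h := B')
    · simpa [add_comm] using hAB.sub hA'
    · exact hB'
    · intro n; have := hA n; simp only; linarith
    · exact hB

/-- The LUR property of `N` upgraded to sequences with `N (y n) → N y₀`. -/
lemma LURData.lur' (d : LURData 𝕜 X) (y₀ : X) (y : ℕ → X)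
    (h1 : Tendsto (fun n => d.N (y n)) atTop (𝓝 (d.N y₀)))
    (h2 : Tendsto (fun n => d.N (y n + y₀)) atTop (𝓝 (2 * d.N y₀))) :
    Tendsto (fun n => d.N (y n - y₀)) atTop (𝓝 0) := by
  by_cases h0 : d.N y₀ = 0
  · have hy0 : y₀ = 0 := d.eq_zero_of_N h0
    subst hy0
    simpa [h0] using h1
  have hq : 0 < d.N y₀ := lt_of_le_of_ne (d.nonneg _) (Ne.symm h0)
  set t : ℕ → ℝ := fun n => min 1 (d.N y₀ / d.N (y n)) with ht_def
  have ht0 : ∀ n, 0 ≤ t n := fun n =>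
    le_min zero_le_one (div_nonneg hq.le (d.nonneg _))
  have ht1 : ∀ n, t n ≤ 1 := fun n => min_le_left _ _
  have htl : Tendsto t atTop (𝓝 1) := by
    have : Tendsto (fun n => min 1 (d.N y₀ / d.N (y n))) atTop (𝓝 (min 1 (d.N y₀ / d.N y₀))) :=
      (tendsto_const_nhds).min (Tendsto.div tendsto_const_nhds h1 hq.ne')
    simpa [div_self hq.ne'] using this
  set v : ℕ → X := fun n => ((t n : ℝ) : 𝕜) • y n with hv_def
  have hNv : ∀ n, d.N (v n) = t n * d.N (y n) := by
    intro n
    rw [hv_def]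
    simp only [d.nsmul, RCLike.norm_ofReal, abs_of_nonneg (ht0 n)]
  have hvle : ∀ n, d.N (v n) ≤ d.N y₀ := by
    intro n
    rw [hNv n]
    rcases eq_or_lt_of_le (d.nonneg (y n)) with hz | hz
    · rw [← hz]; simpa using hq.le
    · have : t n ≤ d.N y₀ / d.N (y n) := min_le_right _ _
      calc t n * d.N (y n) ≤ (d.N y₀ / d.N (y n)) * d.N (y n) := by
            apply mul_le_mul_of_nonneg_right this (d.nonneg _)
        _ = d.N y₀ := div_mul_cancel₀ _ hz.ne'
  have hdiff : ∀ n, d.N (y n - v n) = (1 - t n) * d.N (y n) := by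
    intro n
    have : y n - v n = ((1 - t n : ℝ) : 𝕜) • y n := by
      rw [hv_def]
      simp only [RCLike.ofReal_sub, RCLike.ofReal_one, sub_smul, one_smul]
    rw [this, d.nsmul, RCLike.norm_ofReal, abs_of_nonneg (by have := ht1 n; linarith)]
  have hrem : Tendsto (fun n => (1 - t n) * d.N (y n)) atTop (𝓝 0) := by
    have : Tendsto (fun n => (1 - t n) * d.N (y n)) atTop (𝓝 ((1 - 1) * d.N y₀)) :=
      ((tendsto_const_nhds.sub htl)).mul h1
    simpa using this
  have hvlim : Tendsto (fun n => d.N (v n + y₀)) atTop (𝓝 (2 * d.N y₀)) := by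
    apply tendsto_of_tendsto_of_tendsto_of_le_of_le
      (g := fun n => d.N (y n + y₀) - (1 - t n) * d.N (y n))
      (h := fun n => d.N (v n) + d.N y₀)
    · simpa using h2.sub hrem
    · have : Tendsto (fun n => t n * d.N (y n) + d.N y₀) atTop (𝓝 (1 * d.N y₀ + d.N y₀)) :=
        (htl.mul h1).add tendsto_const_nhds
      have h' : Tendsto (fun n => d.N (v n) + d.N y₀) atTop (𝓝 (1 * d.N y₀ + d.N y₀)) := by
        simpa only [hNv] using this
      have : (1 : ℝ) * d.N y₀ + d.N y₀ = 2 * d.N y₀ := by ring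
      rwa [this] at h'
    · intro n
      have htri : d.N (y n + y₀) ≤ d.N (v n + y₀) + d.N (y n - v n) := by
        have : y n + y₀ = (v n + y₀) + (y n - v n) := by abel
        rw [this]; exact d.tri _ _
      show d.N (y n + y₀) - (1 - t n) * d.N (y n) ≤ d.N (v n + y₀)
      linarith [hdiff n, htri]
    · intro n; exact d.tri _ _
  have hmain := d.lur y₀ v hvle hvlim
  apply tendsto_of_tendsto_of_tendsto_of_le_of_le
    (g := fun _ => (0:ℝ)) (h := fun n => d.N (v n - y₀) + (1 - t n) * d.N (y n))
  · exact tendsto_const_nhds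
  · simpa using hmain.add hrem
  · intro n; exact d.nonneg _
  · intro n
    have heq : y n - y₀ = (v n - y₀) + (y n - v n) := by abel
    show d.N (y n - y₀) ≤ d.N (v n - y₀) + (1 - t n) * d.N (y n)
    rw [heq]
    calc d.N _ ≤ d.N (v n - y₀) + d.N (y n - v n) := d.tri _ _
      _ = d.N (v n - y₀) + (1 - t n) * d.N (y n) := by rw [hdiff n]

/-- Auxiliary: from `aₙ² → 0` deduce `aₙ → 0`. -/
lemma tendsto_of_sq {a : ℕ → ℝ} (h : Tendsto (fun n => a n ^ 2) atTop (𝓝 0)) :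
    Tendsto a atTop (𝓝 0) := by
  have habs : Tendsto (fun n => |a n|) atTop (𝓝 0) := by
    have := (Real.continuous_sqrt.tendsto 0).comp h
    simpa [Function.comp_def, Real.sqrt_sq_eq_abs] using this
  have : Tendsto (fun n => ‖a n - 0‖) atTop (𝓝 0) := by
    simpa [Real.norm_eq_abs] using habs
  simpa using tendsto_iff_norm_sub_tendsto_zero.mpr this

/-- Local uniform rotundity of the space `LW d`, in the form needed below. -/
lemma wlur (d : LURData 𝕜 X) (w₀ : LW d) (v : ℕ → LW d)
    (hle : ∀ n, ‖v n‖ ≤ ‖w₀‖)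
    (hlim : Tendsto (fun n => ‖v n + w₀‖) atTop (𝓝 (2 * ‖w₀‖))) :
    Tendsto (fun n => ‖w2 d (v n) - w2 d w₀‖) atTop (𝓝 0) := by
  set p : ℕ → ℝ := fun n => ‖w1 d (v n)‖ with hp_def
  set q : ℕ → ℝ := fun n => d.N (w2 d (v n)) with hq_def
  set p₀ : ℝ := ‖w1 d w₀‖ with hp0_def
  set q₀ : ℝ := d.N (w2 d w₀) with hq0_def
  have hp0 : 0 ≤ p₀ := norm_nonneg _
  have hq0 : 0 ≤ q₀ := d.nonneg _
  have hpn : ∀ n, 0 ≤ p n := fun n => norm_nonneg _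
  have hqn : ∀ n, 0 ≤ q n := fun n => d.nonneg _
  set M2 : ℝ := p₀ ^ 2 + q₀ ^ 2 with hM2_def
  have hM2 : ‖w₀‖ ^ 2 = M2 := norm_LW_sq w₀
  have hS : ∀ n, p n ^ 2 + q n ^ 2 ≤ M2 := by
    intro n
    have := pow_le_pow_left₀ (norm_nonneg (v n)) (hle n) 2
    rw [norm_LW_sq, hM2] at this
    exact this
  have hD2 : Tendsto (fun n => ‖v n + w₀‖ ^ 2) atTop (𝓝 (4 * M2)) := by
    have := hlim.pow 2
    have h4 : (2 * ‖w₀‖) ^ 2 = 4 * M2 := by rw [mul_pow, hM2]; ring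
    rwa [h4] at this
  have hD2eq : ∀ n, ‖v n + w₀‖ ^ 2
      = ‖w1 d (v n) + w1 d w₀‖ ^ 2 + d.N (w2 d (v n) + w2 d w₀) ^ 2 := by
    intro n
    rw [norm_LW_sq, w1_add, w2_add]
  have hE : Tendsto (fun n => (p n + p₀) ^ 2 + (q n + q₀) ^ 2) atTop (𝓝 (4 * M2)) := by
    apply tendsto_of_tendsto_of_tendsto_of_le_of_le
      (g := fun n => ‖v n + w₀‖ ^ 2) (h := fun _ => 4 * M2)
    · exact hD2
    · exact tendsto_const_nhds
    · intro n
      show ‖v n + w₀‖ ^ 2 ≤ (p n + p₀) ^ 2 + (q n + q₀) ^ 2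
      rw [hD2eq n]
      have h1 : ‖w1 d (v n) + w1 d w₀‖ ≤ p n + p₀ := norm_add_le _ _
      have h2 : d.N (w2 d (v n) + w2 d w₀) ≤ q n + q₀ := d.tri _ _
      have h3 : 0 ≤ d.N (w2 d (v n) + w2 d w₀) := d.nonneg _
      nlinarith [norm_nonneg (w1 d (v n) + w1 d w₀)]
    · intro n
      show (p n + p₀) ^ 2 + (q n + q₀) ^ 2 ≤ 4 * M2
      nlinarith [hS n, sq_nonneg (p n - p₀), sq_nonneg (q n - q₀)]
  have hc_le : ∀ n, p n * p₀ + q n * q₀ ≤ M2 := by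
    intro n
    nlinarith [hS n, sq_nonneg (p n - p₀), sq_nonneg (q n - q₀)]
  have hsum : Tendsto (fun n => (p n ^ 2 + q n ^ 2) + 2 * (p n * p₀ + q n * q₀))
      atTop (𝓝 (M2 + 2 * M2)) := by
    have heq : (fun n => (p n ^ 2 + q n ^ 2) + 2 * (p n * p₀ + q n * q₀))
        = fun n => ((p n + p₀) ^ 2 + (q n + q₀) ^ 2) - M2 := by
      funext n; simp only [hM2_def]; ring
    rw [heq]
    have := hE.sub (tendsto_const_nhds (x := M2))
    have h4 : 4 * M2 - M2 = M2 + 2 * M2 := by ring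
    rwa [h4] at this
  obtain ⟨hSlim, hclim2⟩ := tendsto_pair (A := fun n => p n ^ 2 + q n ^ 2)
    (B := fun n => 2 * (p n * p₀ + q n * q₀)) (A' := fun _ => M2) (B' := fun _ => 2 * M2)
    (fun n => hS n)
    (fun n => by
      show 2 * (p n * p₀ + q n * q₀) ≤ 2 * M2
      linarith [hc_le n])
    hsum tendsto_const_nhds tendsto_const_nhds
  have hF : Tendsto (fun n => (p n - p₀) ^ 2 + (q n - q₀) ^ 2) atTop (𝓝 0) := by
    have heq : (fun n => (p n - p₀) ^ 2 + (q n - q₀) ^ 2)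
        = fun n => ((p n ^ 2 + q n ^ 2) + M2) - 2 * (p n * p₀ + q n * q₀) := by
      funext n; simp only [hM2_def]; ring
    rw [heq]
    have := (hSlim.add (tendsto_const_nhds (x := M2))).sub hclim2
    have h4 : M2 + M2 - 2 * M2 = 0 := by ring
    rwa [h4] at this
  have hpsq : Tendsto (fun n => (p n - p₀) ^ 2) atTop (𝓝 0) := by
    apply tendsto_of_tendsto_of_tendsto_of_le_of_le (g := fun _ => (0:ℝ))
      (h := fun n => (p n - p₀) ^ 2 + (q n - q₀) ^ 2) tendsto_const_nhds hF
    · intro n; show (0:ℝ) ≤ (p n - p₀) ^ 2; positivity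
    · intro n
      show (p n - p₀) ^ 2 ≤ (p n - p₀) ^ 2 + (q n - q₀) ^ 2
      nlinarith [sq_nonneg (q n - q₀)]
  have hqsq : Tendsto (fun n => (q n - q₀) ^ 2) atTop (𝓝 0) := by
    apply tendsto_of_tendsto_of_tendsto_of_le_of_le (g := fun _ => (0:ℝ))
      (h := fun n => (p n - p₀) ^ 2 + (q n - q₀) ^ 2) tendsto_const_nhds hF
    · intro n; show (0:ℝ) ≤ (q n - q₀) ^ 2; positivity
    · intro n
      show (q n - q₀) ^ 2 ≤ (p n - p₀) ^ 2 + (q n - q₀) ^ 2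
      nlinarith [sq_nonneg (p n - p₀)]
  have hp : Tendsto p atTop (𝓝 p₀) := by
    have := (tendsto_of_sq hpsq).add (tendsto_const_nhds (x := p₀))
    simpa using this
  have hq : Tendsto q atTop (𝓝 q₀) := by
    have := (tendsto_of_sq hqsq).add (tendsto_const_nhds (x := q₀))
    simpa using this
  -- second component of the sum converges
  have hD2' : Tendsto (fun n => ‖w1 d (v n) + w1 d w₀‖ ^ 2 + d.N (w2 d (v n) + w2 d w₀) ^ 2)
      atTop (𝓝 (4 * M2)) := by
    have heq : (fun n => ‖w1 d (v n) + w1 d w₀‖ ^ 2 + d.N (w2 d (v n) + w2 d w₀) ^ 2)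
        = fun n => ‖v n + w₀‖ ^ 2 := by funext n; rw [hD2eq n]
    rw [heq]; exact hD2
  have hA' : Tendsto (fun n => (p n + p₀) ^ 2) atTop (𝓝 ((2 * p₀) ^ 2)) := by
    have := (hp.add (tendsto_const_nhds (x := p₀))).pow 2
    have h4 : p₀ + p₀ = 2 * p₀ := by ring
    rwa [h4] at this
  have hB' : Tendsto (fun n => (q n + q₀) ^ 2) atTop (𝓝 ((2 * q₀) ^ 2)) := by
    have := (hq.add (tendsto_const_nhds (x := q₀))).pow 2
    have h4 : q₀ + q₀ = 2 * q₀ := by ring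
    rwa [h4] at this
  have h4M2 : (4 : ℝ) * M2 = (2 * p₀) ^ 2 + (2 * q₀) ^ 2 := by rw [hM2_def]; ring
  rw [h4M2] at hD2'
  obtain ⟨-, hBlim⟩ := tendsto_pair
    (A := fun n => ‖w1 d (v n) + w1 d w₀‖ ^ 2) (B := fun n => d.N (w2 d (v n) + w2 d w₀) ^ 2)
    (A' := fun n => (p n + p₀) ^ 2) (B' := fun n => (q n + q₀) ^ 2)
    (fun n => by
      have h1 : ‖w1 d (v n) + w1 d w₀‖ ≤ p n + p₀ := norm_add_le _ _
      show ‖w1 d (v n) + w1 d w₀‖ ^ 2 ≤ (p n + p₀) ^ 2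
      nlinarith [norm_nonneg (w1 d (v n) + w1 d w₀)])
    (fun n => by
      have h2 : d.N (w2 d (v n) + w2 d w₀) ≤ q n + q₀ := d.tri _ _
      show d.N (w2 d (v n) + w2 d w₀) ^ 2 ≤ (q n + q₀) ^ 2
      nlinarith [d.nonneg (w2 d (v n) + w2 d w₀)])
    hD2' hA' hB'
  have hNsum : Tendsto (fun n => d.N (w2 d (v n) + w2 d w₀)) atTop (𝓝 (2 * q₀)) := by
    have := (Real.continuous_sqrt.tendsto _).comp hBlim
    simp only [Function.comp_def] at this
    have heq : ∀ n, Real.sqrt (d.N (w2 d (v n) + w2 d w₀) ^ 2) = d.N (w2 d (v n) + w2 d w₀) :=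
      fun n => Real.sqrt_sq (d.nonneg _)
    have h2q : Real.sqrt ((2 * q₀) ^ 2) = 2 * q₀ := Real.sqrt_sq (by linarith)
    simp only [heq, h2q] at this
    exact this
  have hNmain := d.lur' (w2 d w₀) (fun n => w2 d (v n)) hq hNsum
  -- convert `N` convergence to norm convergence
  apply tendsto_of_tendsto_of_tendsto_of_le_of_le (g := fun _ => (0:ℝ))
    (h := fun n => d.c⁻¹ * d.N (w2 d (v n) - w2 d w₀)) tendsto_const_nhds
  · have := hNmain.const_mul d.c⁻¹
    simpa using this
  · intro n; exact norm_nonneg _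
  · intro n
    have h1 := d.lb (w2 d (v n) - w2 d w₀)
    have h2 := d.hc
    show ‖w2 d (v n) - w2 d w₀‖ ≤ d.c⁻¹ * d.N (w2 d (v n) - w2 d w₀)
    rw [inv_mul_eq_div, le_div_iff₀ h2]
    linarith

/-- The operator `x ↦ (f x, ε x) : X → 𝕜 ⊕₂ (X, N)`. -/
noncomputable def Top (d : LURData 𝕜 X) (f : X →L[𝕜] 𝕜) (ε : ℝ) : X →L[𝕜] LW d :=
  LinearMap.mkContinuous
    { toFun := fun x => mkW d (f x) (((ε : ℝ) : 𝕜) • x)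
      map_add' := fun x y => by
        show mkW d (f (x + y)) (((ε : ℝ) : 𝕜) • (x + y))
          = mkW d (f x) (((ε : ℝ) : 𝕜) • x) + mkW d (f y) (((ε : ℝ) : 𝕜) • y)
        rw [map_add, smul_add, mkW_add]
      map_smul' := fun a x => by
        show mkW d (f (a • x)) (((ε : ℝ) : 𝕜) • a • x) = a • mkW d (f x) (((ε : ℝ) : 𝕜) • x)
        rw [map_smul, smul_comm, mkW_smul]
        rfl }
    (‖f‖ + |ε| * d.C)
    (by
      intro x
      show ‖mkW d (f x) (((ε : ℝ) : 𝕜) • x)‖ ≤ (‖f‖ + |ε| * d.C) * ‖x‖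
      rw [norm_LW]
      simp only [w1_mkW, w2_mkW]
      have h1 : ‖f x‖ ≤ ‖f‖ * ‖x‖ := f.le_opNorm x
      have h2 : d.N (((ε : ℝ) : 𝕜) • x) ≤ |ε| * d.C * ‖x‖ := by
        rw [d.nsmul, RCLike.norm_ofReal]
        have := d.ub x
        have := abs_nonneg ε
        nlinarith
      have h3 : (0:ℝ) ≤ d.N (((ε : ℝ) : 𝕜) • x) := d.nonneg _
      calc Real.sqrt (‖f x‖ ^ 2 + d.N (((ε : ℝ) : 𝕜) • x) ^ 2)
          ≤ Real.sqrt ((‖f‖ * ‖x‖ + |ε| * d.C * ‖x‖) ^ 2) := by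
            apply Real.sqrt_le_sqrt
            nlinarith [norm_nonneg (f x), norm_nonneg x, norm_nonneg f, d.hC, abs_nonneg ε]
        _ = ‖f‖ * ‖x‖ + |ε| * d.C * ‖x‖ := Real.sqrt_sq
              (by have := d.hC.le; positivity)
        _ = (‖f‖ + |ε| * d.C) * ‖x‖ := by ring)

@[simp] lemma w1_Top (d : LURData 𝕜 X) (f : X →L[𝕜] 𝕜) (ε : ℝ) (x : X) :
    w1 d (Top d f ε x) = f x := rfl

@[simp] lemma w2_Top (d : LURData 𝕜 X) (f : X →L[𝕜] 𝕜) (ε : ℝ) (x : X) :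
    w2 d (Top d f ε x) = ((ε : ℝ) : 𝕜) • x := rfl

lemma norm_Top_ge (d : LURData 𝕜 X) (f : X →L[𝕜] 𝕜) (ε : ℝ) : ‖f‖ ≤ ‖Top d f ε‖ := by
  apply f.opNorm_le_bound (norm_nonneg _)
  intro x
  calc ‖f x‖ = ‖w1 d (Top d f ε x)‖ := rfl
    _ ≤ ‖Top d f ε x‖ := norm_w1_le _
    _ ≤ ‖Top d f ε‖ * ‖x‖ := (Top d f ε).le_opNorm x

set_option maxHeartbeats 8000000 in
/-- The main perturbation argument. -/
lemma main [CompleteSpace X] (d : LURData 𝕜 X)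
    (hA : ∀ (W : Type) [NormedAddCommGroup W] [NormedSpace 𝕜 W] [CompleteSpace W],
      Dense {T : X →L[𝕜] W | ∃ x, ‖x‖ = 1 ∧ ‖T x‖ = ‖T‖})
    (f : X →L[𝕜] 𝕜) (hf : f ≠ 0) {ε' : ℝ} (hε' : 0 < ε') :
    ∃ (F : X →L[𝕜] 𝕜) (z₀ : X), StronglyExposesBall F z₀ ∧ ‖F - f‖ < ε' := by
  have hC := d.hC
  have hc := d.hc
  set F₀ := ‖f‖ with hF₀_def
  have hF₀pos : 0 < F₀ := norm_pos_iff.mpr hf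
  set ε := min (ε' / (8 * d.C)) (F₀ / (8 * d.C)) with hε_def
  have hεpos : 0 < ε := lt_min (by positivity) (by positivity)
  have hεC : ε * d.C ≤ ε' / 8 := by
    have h1 : ε ≤ ε' / (8 * d.C) := min_le_left _ _
    rw [le_div_iff₀ (by positivity)] at h1
    nlinarith
  have hεC₂ : ε * d.C ≤ F₀ / 8 := by
    have h1 : ε ≤ F₀ / (8 * d.C) := min_le_right _ _
    rw [le_div_iff₀ (by positivity)] at h1
    nlinarith
  set η := min (min (d.c * ε / 2) (F₀ / 8)) (ε' / 8) with hη_def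
  have hηpos : 0 < η := lt_min (lt_min (by positivity) (by positivity)) (by positivity)
  have hη1 : η ≤ d.c * ε / 2 := le_trans (min_le_left _ _) (min_le_left _ _)
  have hη2 : η ≤ F₀ / 8 := le_trans (min_le_left _ _) (min_le_right _ _)
  have hη3 : η ≤ ε' / 8 := min_le_right _ _
  set T := Top d f ε with hT_def
  -- obtain a nearby norm-attaining operator
  obtain ⟨S, hSb, x₀, hx₀, hattain⟩ := (Metric.dense_iff.mp (hA (LW d))) T η hηpos
  have hST : ‖S - T‖ ≤ η := by
    have := Metric.mem_ball.mp hSb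
    rw [dist_eq_norm] at this
    exact this.le
  have hpert : ∀ x, ‖S x - T x‖ ≤ η * ‖x‖ := by
    intro x
    calc ‖S x - T x‖ = ‖(S - T) x‖ := by simp
      _ ≤ ‖S - T‖ * ‖x‖ := (S - T).le_opNorm x
      _ ≤ η * ‖x‖ := mul_le_mul_of_nonneg_right hST (norm_nonneg x)
  have hSnorm : F₀ - η ≤ ‖S‖ := by
    have h1 : ‖T‖ - ‖S‖ ≤ ‖T - S‖ := norm_sub_norm_le T S
    rw [norm_sub_rev] at h1
    have h2 : F₀ ≤ ‖T‖ := norm_Top_ge d f ε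
    linarith
  have hS78 : 7 * F₀ / 8 ≤ ‖S‖ := by linarith
  have hSpos : 0 < ‖S‖ := by linarith
  have hSx₀ne : S x₀ ≠ 0 := by
    intro hz
    rw [hz, norm_zero] at hattain
    exact hSpos.ne hattain
  obtain ⟨w, hw_norm, hw_eq⟩ := exists_dual_vector 𝕜 (S x₀) (norm_ne_zero_iff.mpr hSx₀ne)
  set h : X →L[𝕜] 𝕜 := w.comp S with hh_def
  have happ : ∀ x, h x = w (S x) := fun x => rfl
  have hhx₀ : h x₀ = ((‖S‖ : ℝ) : 𝕜) := by
    rw [happ, hw_eq, hattain]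
  have hh_le : ∀ x, ‖h x‖ ≤ ‖S‖ * ‖x‖ := by
    intro x
    calc ‖h x‖ = ‖w (S x)‖ := by rw [happ]
      _ ≤ ‖w‖ * ‖S x‖ := w.le_opNorm _
      _ = ‖S x‖ := by rw [hw_norm, one_mul]
      _ ≤ ‖S‖ * ‖x‖ := S.le_opNorm x
  have hhnorm : ‖h‖ = ‖S‖ := by
    apply le_antisymm (h.opNorm_le_bound hSpos.le hh_le)
    have h1 : re (h x₀) = ‖S‖ := by rw [hhx₀, RCLike.ofReal_re]
    have h2 : re (h x₀) ≤ ‖h x₀‖ := RCLike.re_le_norm _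
    have h3 : ‖h x₀‖ ≤ ‖h‖ * ‖x₀‖ := h.le_opNorm x₀
    rw [hx₀, mul_one] at h3
    linarith
  -- strong exposition of `h` at `x₀`
  have hkey : ∀ u : ℕ → X, (∀ n, ‖u n‖ ≤ 1) →
      Tendsto (fun n => re (h (u n))) atTop (𝓝 ‖S‖) → Tendsto u atTop (𝓝 x₀) := by
    intro u hu hlim
    have hSu_le : ∀ n, ‖S (u n)‖ ≤ ‖S x₀‖ := by
      intro n
      rw [hattain]
      calc ‖S (u n)‖ ≤ ‖S‖ * ‖u n‖ := S.le_opNorm _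
        _ ≤ ‖S‖ * 1 := mul_le_mul_of_nonneg_left (hu n) hSpos.le
        _ = ‖S‖ := mul_one _
    have hsum : Tendsto (fun n => ‖S (u n) + S x₀‖) atTop (𝓝 (2 * ‖S x₀‖)) := by
      rw [hattain]
      apply tendsto_of_tendsto_of_tendsto_of_le_of_le
        (g := fun n => re (h (u n)) + ‖S‖) (h := fun _ => 2 * ‖S‖)
      · have := hlim.add (tendsto_const_nhds (x := ‖S‖))
        rwa [← two_mul] at this
      · exact tendsto_const_nhds
      · intro n
        show re (h (u n)) + ‖S‖ ≤ ‖S (u n) + S x₀‖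
        have h1 : re (w (S (u n) + S x₀)) = re (h (u n)) + ‖S‖ := by
          rw [map_add, map_add, happ, hw_eq, hattain, RCLike.ofReal_re]
        calc re (h (u n)) + ‖S‖ = re (w (S (u n) + S x₀)) := h1.symm
          _ ≤ ‖w (S (u n) + S x₀)‖ := RCLike.re_le_norm _
          _ ≤ ‖w‖ * ‖S (u n) + S x₀‖ := w.le_opNorm _
          _ = ‖S (u n) + S x₀‖ := by rw [hw_norm, one_mul]
      · intro n
        show ‖S (u n) + S x₀‖ ≤ 2 * ‖S‖
        calc ‖S (u n) + S x₀‖ ≤ ‖S (u n)‖ + ‖S x₀‖ := norm_add_le _ _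
          _ ≤ ‖S‖ + ‖S‖ := by
              have := hSu_le n
              rw [hattain] at this ⊢
              exact add_le_add this le_rfl
          _ = 2 * ‖S‖ := (two_mul _).symm
    have hw2conv := wlur d (S x₀) (fun n => S (u n)) hSu_le hsum
    have hηc : η / d.c ≤ ε / 2 := by
      rw [div_le_iff₀ hc]
      nlinarith
    have hlow : ∀ n, ‖u n - x₀‖ ≤ (2 / ε) * ‖w2 d (S (u n)) - w2 d (S x₀)‖ := by
      intro n
      have heq : w2 d (S (u n)) - w2 d (S x₀) = w2 d (S (u n - x₀)) := by
        rw [← w2_sub, ← map_sub]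
      have h1 : d.N (w2 d (S (u n - x₀) - T (u n - x₀))) ≤ η * ‖u n - x₀‖ :=
        le_trans (N_w2_le _) (hpert _)
      have h2 : d.c * ‖w2 d (S (u n - x₀) - T (u n - x₀))‖ ≤ η * ‖u n - x₀‖ :=
        le_trans (d.lb _) h1
      have h3 : w2 d (S (u n - x₀) - T (u n - x₀))
          = w2 d (S (u n - x₀)) - ((ε : ℝ) : 𝕜) • (u n - x₀) := by
        rw [w2_sub, w2_Top]
      have h4 : ‖w2 d (S (u n - x₀)) - ((ε : ℝ) : 𝕜) • (u n - x₀)‖ ≤ (ε / 2) * ‖u n - x₀‖ := by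
        rw [← h3]
        have h5 : ‖w2 d (S (u n - x₀) - T (u n - x₀))‖ ≤ (η / d.c) * ‖u n - x₀‖ := by
          rw [div_mul_eq_mul_div, le_div_iff₀ hc]
          nlinarith
        calc ‖w2 d (S (u n - x₀) - T (u n - x₀))‖ ≤ (η / d.c) * ‖u n - x₀‖ := h5
          _ ≤ (ε / 2) * ‖u n - x₀‖ := mul_le_mul_of_nonneg_right hηc (norm_nonneg _)
      have h6 : ‖((ε : ℝ) : 𝕜) • (u n - x₀)‖ = ε * ‖u n - x₀‖ := by
        rw [norm_smul, RCLike.norm_ofReal, abs_of_pos hεpos]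
      have h7 : ε * ‖u n - x₀‖ - (ε / 2) * ‖u n - x₀‖ ≤ ‖w2 d (S (u n - x₀))‖ := by
        have h8 := norm_sub_norm_le (((ε : ℝ) : 𝕜) • (u n - x₀)) (w2 d (S (u n - x₀)))
        rw [norm_sub_rev] at h8
        rw [h6] at h8
        linarith [h4, h8]
      rw [heq, div_mul_eq_mul_div, le_div_iff₀ hεpos]
      linarith
    apply tendsto_iff_norm_sub_tendsto_zero.mpr
    apply tendsto_of_tendsto_of_tendsto_of_le_of_le (g := fun _ => (0:ℝ))
      (h := fun n => (2 / ε) * ‖w2 d (S (u n)) - w2 d (S x₀)‖)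
    · exact tendsto_const_nhds
    · have := hw2conv.const_mul (2 / ε)
      simpa using this
    · intro n; exact norm_nonneg _
    · intro n; exact hlow n
  -- the functional β and the rotation λ
  set e1 : LW d := mkW d 1 0 with he1_def
  have he1 : ‖e1‖ = 1 := by
    rw [he1_def, norm_LW]
    simp [d.N_zero]
  set β := w e1 with hβ_def
  have hβ1 : ‖β‖ ≤ 1 := by
    calc ‖w e1‖ ≤ ‖w‖ * ‖e1‖ := w.le_opNorm _
      _ = 1 := by rw [hw_norm, he1, one_mul]
  have hiY : ∀ y : X, ‖w (mkW d 0 y)‖ ≤ d.N y := by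
    intro y
    have h1 : ‖mkW d 0 y‖ = d.N y := by
      rw [norm_LW]
      simp [Real.sqrt_sq (d.nonneg y)]
    calc ‖w (mkW d 0 y)‖ ≤ ‖w‖ * ‖mkW d 0 y‖ := w.le_opNorm _
      _ = d.N y := by rw [hw_norm, one_mul, h1]
  have hdecomp : ∀ v : LW d, w v = w1 d v * β + w (mkW d 0 (w2 d v)) := by
    intro v
    have hv : v = w1 d v • e1 + mkW d 0 (w2 d v) := by
      rw [he1_def, mkW_smul, mkW_add]
      simp [mkW_eta]
    calc w v = w (w1 d v • e1 + mkW d 0 (w2 d v)) := by rw [← hv]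
      _ = w1 d v * β + w (mkW d 0 (w2 d v)) := by
          rw [map_add, map_smul, smul_eq_mul, hβ_def]
  have hw2N : ∀ x, d.N (w2 d (S x)) ≤ (ε * d.C + η) * ‖x‖ := by
    intro x
    have h1 : d.N (w2 d (S x) - w2 d (T x)) ≤ η * ‖x‖ := by
      rw [← w2_sub]
      exact le_trans (N_w2_le _) (hpert x)
    have h2 : d.N (w2 d (T x)) ≤ ε * d.C * ‖x‖ := by
      rw [w2_Top, d.nsmul, RCLike.norm_ofReal, abs_of_pos hεpos]
      nlinarith [d.ub x]
    have h3 : d.N (w2 d (S x)) ≤ d.N (w2 d (T x)) + d.N (w2 d (S x) - w2 d (T x)) := by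
      have heq : w2 d (S x) = w2 d (T x) + (w2 d (S x) - w2 d (T x)) := by abel
      calc d.N (w2 d (S x)) = d.N (w2 d (T x) + (w2 d (S x) - w2 d (T x))) := by rw [← heq]
        _ ≤ _ := d.tri _ _
    nlinarith
  have hβS : (1 - ‖β‖) * ‖S‖ ≤ ε * d.C + η := by
    have h1 : re (w (S x₀)) = ‖S‖ := by rw [hw_eq, hattain, RCLike.ofReal_re]
    have h2 : ‖w1 d (S x₀)‖ ≤ ‖S‖ := by
      rw [← hattain]
      exact norm_w1_le _
    have h3 : ‖w (mkW d 0 (w2 d (S x₀)))‖ ≤ ε * d.C + η := by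
      calc ‖w (mkW d 0 (w2 d (S x₀)))‖ ≤ d.N (w2 d (S x₀)) := hiY _
        _ ≤ (ε * d.C + η) * ‖x₀‖ := hw2N x₀
        _ = ε * d.C + η := by rw [hx₀, mul_one]
    have h5 : re (w (S x₀)) ≤ ‖β‖ * ‖S‖ + (ε * d.C + η) := by
      rw [hdecomp (S x₀)]
      calc re (w1 d (S x₀) * β + w (mkW d 0 (w2 d (S x₀))))
          ≤ ‖w1 d (S x₀) * β + w (mkW d 0 (w2 d (S x₀)))‖ := RCLike.re_le_norm _
        _ ≤ ‖w1 d (S x₀) * β‖ + ‖w (mkW d 0 (w2 d (S x₀)))‖ := norm_add_le _ _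
        _ ≤ ‖β‖ * ‖S‖ + (ε * d.C + η) := by
            rw [norm_mul]
            have hb := norm_nonneg β
            nlinarith [norm_nonneg (w1 d (S x₀))]
    linarith
  have hεCη : ε * d.C + η ≤ F₀ / 4 := by linarith
  have hβpos : 0 < ‖β‖ := by nlinarith
  have hβne : β ≠ 0 := norm_pos_iff.mp hβpos
  set lam : 𝕜 := ((‖β‖ : ℝ) : 𝕜) / β with hlam_def
  have hlam_norm : ‖lam‖ = 1 := by
    rw [hlam_def, norm_div, RCLike.norm_ofReal, abs_of_pos hβpos, div_self hβpos.ne']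
  have hlamβ : lam * β = ((‖β‖ : ℝ) : 𝕜) := div_mul_cancel₀ _ hβne
  have hconj : (starRingEnd 𝕜) lam * lam = 1 := by
    have := RCLike.conj_mul lam
    rw [hlam_norm] at this
    simpa using this
  set F : X →L[𝕜] 𝕜 := lam • h with hF_def
  set z₀ : X := (starRingEnd 𝕜) lam • x₀ with hz₀_def
  have hFnorm : ‖F‖ = ‖S‖ := by
    have h1 : ‖lam • h‖ = ‖lam‖ * ‖h‖ := norm_smul lam h
    rw [hF_def, h1, hlam_norm, one_mul, hhnorm]
  have hFapp : ∀ x, F x = lam * h x := fun x => rfl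
  refine ⟨F, z₀, ⟨?_, ?_, ?_⟩, ?_⟩
  · rw [hz₀_def, norm_smul, RCLike.norm_conj, hlam_norm, one_mul, hx₀]
  · rw [hFapp, hz₀_def, map_smul, smul_eq_mul, hhx₀, hFnorm]
    have : lam * ((starRingEnd 𝕜) lam * ((‖S‖ : ℝ) : 𝕜)) = ((‖S‖ : ℝ) : 𝕜) := by
      rw [← mul_assoc, mul_comm lam ((starRingEnd 𝕜) lam), hconj, one_mul]
    rw [this, RCLike.ofReal_re]
  · intro u hu hlim
    rw [hFnorm] at hlim
    set v : ℕ → X := fun n => lam • u n with hv_def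
    have hv_norm : ∀ n, ‖v n‖ ≤ 1 := by
      intro n
      rw [hv_def]
      simp only [norm_smul, hlam_norm, one_mul]
      exact hu n
    have hlim' : Tendsto (fun n => re (h (v n))) atTop (𝓝 ‖S‖) := by
      have heq : ∀ n, h (v n) = F (u n) := by
        intro n
        rw [hv_def, hFapp, map_smul, smul_eq_mul]
      simp only [heq]
      exact hlim
    have hvx := hkey v hv_norm hlim'
    have huv : ∀ n, u n = (starRingEnd 𝕜) lam • v n := by
      intro n
      rw [hv_def]
      simp only [smul_smul, hconj, one_smul]
    have := hvx.const_smul ((starRingEnd 𝕜) lam)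
    rw [hz₀_def]
    have heq : (fun n => (starRingEnd 𝕜) lam • v n) = u := funext fun n => (huv n).symm
    rwa [heq] at this
  · -- the norm estimate
    have hbF : (1 - ‖β‖) * F₀ ≤ 2 * (ε * d.C + η) := by
      nlinarith [mul_nonneg (sub_nonneg.mpr hβ1) (by linarith : (0:ℝ) ≤ 2 * ‖S‖ - F₀)]
    set K : ℝ := η + (1 - ‖β‖) * F₀ + (ε * d.C + η) with hK_def
    have hK_nonneg : 0 ≤ K := by
      have := sub_nonneg.mpr hβ1
      have := hF₀pos.le
      positivity
    have hbound : ∀ x, ‖F x - f x‖ ≤ K * ‖x‖ := by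
      intro x
      have hfx : w1 d (T x) = f x := rfl
      have h1 : ‖w1 d (S x) - f x‖ ≤ η * ‖x‖ := by
        rw [← hfx, ← w1_sub]
        exact le_trans (norm_w1_le _) (hpert x)
      have h2 : ‖w (mkW d 0 (w2 d (S x)))‖ ≤ (ε * d.C + η) * ‖x‖ :=
        le_trans (hiY _) (hw2N x)
      have hdec : F x - f x
          = ((‖β‖ : ℝ) : 𝕜) * (w1 d (S x) - f x) + (((‖β‖ : ℝ) : 𝕜) - 1) * f x
            + lam * w (mkW d 0 (w2 d (S x))) := by
        rw [hFapp, happ, hdecomp (S x)]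
        rw [mul_add]
        have : lam * (w1 d (S x) * β) = ((‖β‖ : ℝ) : 𝕜) * w1 d (S x) := by
          rw [← hlamβ]; ring
        rw [this]
        ring
      rw [hdec]
      have hn1 : ‖((‖β‖ : ℝ) : 𝕜) * (w1 d (S x) - f x)‖ ≤ η * ‖x‖ := by
        rw [norm_mul, RCLike.norm_ofReal, abs_of_pos hβpos]
        nlinarith [norm_nonneg (w1 d (S x) - f x)]
      have hn2 : ‖(((‖β‖ : ℝ) : 𝕜) - 1) * f x‖ ≤ (1 - ‖β‖) * F₀ * ‖x‖ := by
        rw [norm_mul]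
        have he : (((‖β‖ : ℝ) : 𝕜) - 1) = (((‖β‖ - 1 : ℝ)) : 𝕜) := by
          rw [RCLike.ofReal_sub, RCLike.ofReal_one]
        rw [he, RCLike.norm_ofReal, abs_of_nonpos (by linarith)]
        have hfx2 : ‖f x‖ ≤ F₀ * ‖x‖ := f.le_opNorm x
        have : (0:ℝ) ≤ 1 - ‖β‖ := by linarith
        calc -(‖β‖ - 1) * ‖f x‖ = (1 - ‖β‖) * ‖f x‖ := by ring
          _ ≤ (1 - ‖β‖) * (F₀ * ‖x‖) := mul_le_mul_of_nonneg_left hfx2 this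
          _ = (1 - ‖β‖) * F₀ * ‖x‖ := by ring
      have hn3 : ‖lam * w (mkW d 0 (w2 d (S x)))‖ ≤ (ε * d.C + η) * ‖x‖ := by
        rw [norm_mul, hlam_norm, one_mul]
        exact h2
      calc ‖((‖β‖ : ℝ) : 𝕜) * (w1 d (S x) - f x) + (((‖β‖ : ℝ) : 𝕜) - 1) * f x
            + lam * w (mkW d 0 (w2 d (S x)))‖
          ≤ ‖((‖β‖ : ℝ) : 𝕜) * (w1 d (S x) - f x) + (((‖β‖ : ℝ) : 𝕜) - 1) * f x‖
            + ‖lam * w (mkW d 0 (w2 d (S x)))‖ := norm_add_le _ _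
        _ ≤ ‖((‖β‖ : ℝ) : 𝕜) * (w1 d (S x) - f x)‖ + ‖(((‖β‖ : ℝ) : 𝕜) - 1) * f x‖
            + ‖lam * w (mkW d 0 (w2 d (S x)))‖ := by
              have := norm_add_le (((‖β‖ : ℝ) : 𝕜) * (w1 d (S x) - f x))
                ((((‖β‖ : ℝ) : 𝕜) - 1) * f x)
              linarith
        _ ≤ η * ‖x‖ + (1 - ‖β‖) * F₀ * ‖x‖ + (ε * d.C + η) * ‖x‖ := by linarith
        _ = K * ‖x‖ := by rw [hK_def]; ring
    have hFf : ‖F - f‖ ≤ K := by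
      apply (F - f).opNorm_le_bound hK_nonneg
      intro x
      have : (F - f) x = F x - f x := by simp
      rw [this]
      exact hbound x
    have hKlt : K < ε' := by
      rw [hK_def]
      nlinarith
    linarith

end SE14

theorem stmt14 {𝕜 X : Type} [RCLike 𝕜]
    [NormedAddCommGroup X] [NormedSpace 𝕜 X] [CompleteSpace X]
    (hLUR : HasEquivLURNorm 𝕜 X)
    (hA : ∀ (W : Type) [NormedAddCommGroup W] [NormedSpace 𝕜 W] [CompleteSpace W],
      Dense {T : X →L[𝕜] W | ∃ x, ‖x‖ = 1 ∧ ‖T x‖ = ‖T‖}) :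
    Dense {f : X →L[𝕜] 𝕜 | ∃ x₀, StronglyExposesBall f x₀} := by
  obtain ⟨N, c, C, hc, hC, hbounds, htri, hsmul, hlur⟩ := hLUR
  let d : SE14.LURData 𝕜 X :=
    ⟨N, c, C, hc, hC, fun x => (hbounds x).1, fun x => (hbounds x).2, htri, hsmul, hlur⟩
  rcases subsingleton_or_nontrivial X with hX | hX
  · have huniv : {f : X →L[𝕜] 𝕜 | ∃ x₀, StronglyExposesBall f x₀} = Set.univ := by
      apply Set.eq_univ_of_forall
      intro f
      have hf0 : ∀ x, f x = 0 := fun x => by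
        have hx : x = 0 := Subsingleton.elim x 0
        rw [hx, map_zero]
      have hfnorm : ‖f‖ = 0 := by
        apply le_antisymm _ (norm_nonneg f)
        apply f.opNorm_le_bound le_rfl
        intro x
        simp [hf0 x]
      refine ⟨0, by simp, ?_, ?_⟩
      · rw [hf0 0, hfnorm]
        simp
      · intro u _ _
        have hu0 : u = fun _ => (0 : X) := funext fun n => Subsingleton.elim _ _
        rw [hu0]
        exact tendsto_const_nhds
    rw [huniv]
    exact dense_univ
  · rw [Metric.dense_iff]
    intro f r hr
    by_cases hf : f = 0
    · obtain ⟨x, hx⟩ := exists_ne (0 : X)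
      obtain ⟨g, hg_norm, hg_eq⟩ := exists_dual_vector 𝕜 x (norm_ne_zero_iff.mpr hx)
      have hgne : g ≠ 0 := by
        intro hg0
        rw [hg0] at hg_norm
        simp at hg_norm
      set f₁ : X →L[𝕜] 𝕜 := ((r / 4 : ℝ) : 𝕜) • g with hf₁_def
      have hr4 : (0:ℝ) < r / 4 := by positivity
      have hf₁ : f₁ ≠ 0 := smul_ne_zero (by
        simp only [ne_eq, RCLike.ofReal_eq_zero]
        exact hr4.ne') hgne
      have hnf₁ : ‖f₁‖ ≤ r / 4 := by
        apply f₁.opNorm_le_bound hr4.le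
        intro y
        have happ : f₁ y = ((r / 4 : ℝ) : 𝕜) * g y := rfl
        rw [happ, norm_mul, RCLike.norm_ofReal, abs_of_pos hr4]
        have hg := g.le_opNorm y
        rw [hg_norm, one_mul] at hg
        nlinarith [norm_nonneg (g y)]
      obtain ⟨F, z₀, hSEB, hdist⟩ := SE14.main d hA f₁ hf₁ hr4
      refine ⟨F, ?_, ⟨z₀, hSEB⟩⟩
      rw [Metric.mem_ball, dist_eq_norm, hf, sub_zero]
      calc ‖F‖ = ‖(F - f₁) + f₁‖ := by rw [sub_add_cancel]
        _ ≤ ‖F - f₁‖ + ‖f₁‖ := norm_add_le _ _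
        _ < r / 4 + r / 4 := by
              have := hnf₁
              linarith
        _ < r := by linarith
    · obtain ⟨F, z₀, hSEB, hdist⟩ := SE14.main d hA f hf hr
      exact ⟨F, Metric.mem_ball.mpr (by rw [dist_eq_norm]; exact hdist), ⟨z₀, hSEB⟩⟩
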